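/- For all n ≥ 3 and k ≥ 0, the number of permutations of length n avoiding both 123 and 132 with exactly k double descents equals C(n−2, k) + 2·C(n−3, k). -/

import Mathlib

open scoped Classical

/-- The word `π₁π₂⋯π_n` of a permutation of `{1,…,n}`, with values in `{1,…,n}`. -/
def permWord {n : ℕ} (π : Equiv.Perm (Fin n)) : List ℕ :=
  List.ofFn fun i => (π i : ℕ) + 1

/-- The word `l` contains the word `ρ` as a (classical) pattern. -/
def ContainsPat (l ρ : List ℕ) : Prop :=
  ∃ f : Fin ρ.length → Fin l.length, StrictMono f ∧
    ∀ a b : Fin ρ.length, ρ.get a < ρ.get b ↔ l.get (f a) < l.get (f b)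

/-- `l` avoids every pattern in the list `B`. -/
def AvoidsAll (l : List ℕ) (B : List (List ℕ)) : Prop :=
  ∀ ρ ∈ B, ¬ ContainsPat l ρ

/-- Number of ascents of the word `l`. -/
def ascents (l : List ℕ) : ℕ :=
  ((Finset.range (l.length - 1)).filter fun i => l.getD i 0 < l.getD (i + 1) 0).card

/-- Number of descents of the word `l`. -/
def descents (l : List ℕ) : ℕ :=
  ((Finset.range (l.length - 1)).filter fun i => l.getD (i + 1) 0 < l.getD i 0).card

/-- Number of double ascents of the word `l`. -/
def dascents (l : List ℕ) : ℕ :=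
  ((Finset.range (l.length - 2)).filter fun i =>
    l.getD i 0 < l.getD (i + 1) 0 ∧ l.getD (i + 1) 0 < l.getD (i + 2) 0).card

/-- Number of double descents of the word `l`. -/
def ddescents (l : List ℕ) : ℕ :=
  ((Finset.range (l.length - 2)).filter fun i =>
    l.getD (i + 1) 0 < l.getD i 0 ∧ l.getD (i + 2) 0 < l.getD (i + 1) 0).card

/-- Number of peaks of the word `l`. -/
def peaks (l : List ℕ) : ℕ :=
  ((Finset.range (l.length - 2)).filter fun i =>
    l.getD i 0 < l.getD (i + 1) 0 ∧ l.getD (i + 2) 0 < l.getD (i + 1) 0).card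

/-- Number of valleys of the word `l`. -/
def valleys (l : List ℕ) : ℕ :=
  ((Finset.range (l.length - 2)).filter fun i =>
    l.getD (i + 1) 0 < l.getD i 0 ∧ l.getD (i + 1) 0 < l.getD (i + 2) 0).card

/-- `acount n k stat B` is the number of permutations of `{1,…,n}` avoiding all
patterns in `B` whose statistic `stat` equals `k`. -/
noncomputable def acount (n k : ℕ) (stat : List ℕ → ℕ) (B : List (List ℕ)) : ℕ :=
  (Finset.univ.filter fun π : Equiv.Perm (Fin n) =>
    AvoidsAll (permWord π) B ∧ stat (permWord π) = k).card

/-! ### Auxiliary development -/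

/-- `l` avoids both 123 and 132: no entry has two larger entries to its right. -/
def Avoid (l : List ℕ) : Prop :=
  ∀ i j k : ℕ, i < j → j < k → k < l.length →
    ¬(l.getD i 0 < l.getD j 0 ∧ l.getD i 0 < l.getD k 0)

/-- Arrangements of a finite set of naturals, as a finset of lists. -/
noncomputable def arr (S : Finset ℕ) : Finset (List ℕ) :=
  (S.sort (· ≤ ·)).permutations.toFinset

lemma mem_arr {S : Finset ℕ} {l : List ℕ} : l ∈ arr S ↔ (l : Multiset ℕ) = S.val := by
  rw [arr, List.mem_toFinset, List.mem_permutations, ← Multiset.coe_eq_coe,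
    Finset.sort_eq]

lemma arr_nodup {S : Finset ℕ} {l : List ℕ} (h : l ∈ arr S) : l.Nodup := by
  rw [mem_arr] at h
  have := S.nodup
  rw [← h] at this
  exact this

lemma arr_length {S : Finset ℕ} {l : List ℕ} (h : l ∈ arr S) : l.length = S.card := by
  rw [mem_arr] at h
  have : Multiset.card (l : Multiset ℕ) = Multiset.card S.val := by rw [h]
  simpa using this

lemma arr_mem_iff {S : Finset ℕ} {l : List ℕ} (h : l ∈ arr S) {y : ℕ} :
    y ∈ l ↔ y ∈ S := by
  rw [mem_arr] at h
  have : y ∈ l ↔ y ∈ (l : Multiset ℕ) := (Multiset.mem_coe).symm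
  rw [this, h]
  rfl

lemma getD_mem {l : List ℕ} {i : ℕ} (h : i < l.length) : l.getD i 0 ∈ l := by
  rw [List.getD_eq_getElem _ _ h]
  exact List.getElem_mem h

lemma nodup_getD_inj {l : List ℕ} (hn : l.Nodup) {i j : ℕ} (hi : i < l.length)
    (hj : j < l.length) (h : l.getD i 0 = l.getD j 0) : i = j := by
  rw [List.getD_eq_getElem _ _ hi, List.getD_eq_getElem _ _ hj] at h
  exact List.Nodup.getElem_inj_iff hn |>.mp h

lemma mem_iff_getD {l : List ℕ} {y : ℕ} : y ∈ l ↔ ∃ i, i < l.length ∧ l.getD i 0 = y := by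
  constructor
  · intro h
    obtain ⟨⟨i, hi⟩, rfl⟩ := List.mem_iff_get.mp h
    exact ⟨i, hi, by rw [List.getD_eq_getElem _ _ hi]; simp⟩
  · rintro ⟨i, hi, rfl⟩
    exact getD_mem hi

lemma avoid_short {l : List ℕ} (h : l.length ≤ 2) : Avoid l := by
  intro i j k hij hjk hk
  omega

lemma avoid_cons {x : ℕ} {r : List ℕ} :
    Avoid (x :: r) ↔ Avoid r ∧
      ∀ j k : ℕ, j < k → k < r.length → ¬(x < r.getD j 0 ∧ x < r.getD k 0) := by
  constructor
  · intro h
    constructor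
    · intro i j k hij hjk hk
      have := h (i+1) (j+1) (k+1) (by omega) (by omega) (by simpa using Nat.succ_lt_succ hk)
      simpa [List.getD_cons_succ] using this
    · intro j k hjk hk
      have := h 0 (j+1) (k+1) (by omega) (by omega) (by simpa using Nat.succ_lt_succ hk)
      simpa [List.getD_cons_succ, List.getD_cons_zero] using this
  · rintro ⟨h1, h2⟩ i j k hij hjk hk
    match i, j, k with
    | 0, j+1, k+1 =>
      have := h2 j k (by omega) (by simpa using hk)
      simpa [List.getD_cons_succ, List.getD_cons_zero] using this
    | i+1, j+1, k+1 =>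
      have := h1 i j k (by omega) (by omega) (by simpa using hk)
      simpa [List.getD_cons_succ] using this
/-- Maximum of a finset of naturals (0 when empty). -/
def mx (S : Finset ℕ) : ℕ := S.sup id

lemma le_mx {S : Finset ℕ} {y : ℕ} (h : y ∈ S) : y ≤ mx S := Finset.le_sup (f := id) h

lemma mx_mem {S : Finset ℕ} (h : S.Nonempty) : mx S ∈ S := by
  obtain ⟨b, hb, he⟩ := Finset.exists_mem_eq_sup S h id
  rw [mx, he]; exact hb

lemma mx_eq_of {S : Finset ℕ} {x : ℕ} (hx : x ∈ S) (hall : ∀ y ∈ S, y ≤ x) : mx S = x :=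
  le_antisymm (Finset.sup_le fun y hy => hall y hy) (le_mx hx)

/-- Second maximum. -/
def mx2 (S : Finset ℕ) : ℕ := mx (S.erase (mx S))

lemma mx2_mem {S : Finset ℕ} (h : 2 ≤ S.card) : mx2 S ∈ S.erase (mx S) := by
  apply mx_mem
  rw [← Finset.card_pos, Finset.card_erase_of_mem (mx_mem (by rw [← Finset.card_pos]; omega))]
  omega

lemma mx2_lt_mx {S : Finset ℕ} (h : 2 ≤ S.card) : mx2 S < mx S := by
  have hm := mx2_mem h
  have h1 := Finset.mem_of_mem_erase hm
  have h2 := Finset.ne_of_mem_erase hm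
  exact lt_of_le_of_ne (le_mx h1) h2

lemma le_mx2 {S : Finset ℕ} {y : ℕ} (hy : y ∈ S) (hne : y ≠ mx S) : y ≤ mx2 S :=
  le_mx (Finset.mem_erase.mpr ⟨hne, hy⟩)

lemma eq_mx_of_mx2_lt {S : Finset ℕ} {y : ℕ} (hy : y ∈ S) (h : mx2 S < y) : y = mx S := by
  by_contra hne
  exact absurd (le_mx2 hy hne) (by omega)

lemma mx_erase_mx2 {S : Finset ℕ} (h : 2 ≤ S.card) : mx (S.erase (mx2 S)) = mx S := by
  apply mx_eq_of
  · exact Finset.mem_erase.mpr ⟨(mx2_lt_mx h).ne', mx_mem (by rw [← Finset.card_pos]; omega)⟩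
  · intro y hy; exact le_mx (Finset.mem_of_mem_erase hy)

lemma ddescents_cons {x : ℕ} {r : List ℕ} (h : 2 ≤ r.length) :
    ddescents (x :: r) =
      ddescents r + (if r.getD 0 0 < x ∧ r.getD 1 0 < r.getD 0 0 then 1 else 0) := by
  unfold ddescents
  simp only [List.length_cons]
  have hlen : r.length + 1 - 2 = (r.length - 2) + 1 := by omega
  rw [hlen, Finset.card_filter, Finset.sum_range_succ', Finset.card_filter]
  simp only [List.getD_cons_succ, List.getD_cons_zero]

lemma getD_cons_tail {l : List ℕ} (h : l ≠ []) : l.getD 0 0 :: l.tail = l := by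
  cases l with
  | nil => exact absurd rfl h
  | cons a t => simp

lemma tail_mem_arr {S : Finset ℕ} {l : List ℕ} (h : l ∈ arr S) (hne : l ≠ []) :
    l.tail ∈ arr (S.erase (l.getD 0 0)) := by
  rw [mem_arr] at h ⊢
  rw [Finset.erase_val, ← h]
  cases l with
  | nil => exact absurd rfl hne
  | cons a t =>
    simp only [List.getD_cons_zero, List.tail_cons]
    rw [show ((a :: t : List ℕ) : Multiset ℕ) = a ::ₘ (t : Multiset ℕ) from rfl,
      Multiset.erase_cons_head]

lemma cons_mem_arr {S : Finset ℕ} {r : List ℕ} {x : ℕ} (h : r ∈ arr (S.erase x))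
    (hx : x ∈ S) : (x :: r) ∈ arr S := by
  rw [mem_arr] at h ⊢
  rw [show ((x :: r : List ℕ) : Multiset ℕ) = x ::ₘ (r : Multiset ℕ) from rfl, h,
    Finset.erase_val, Multiset.cons_erase hx]

lemma head_mem {S : Finset ℕ} {l : List ℕ} (h : l ∈ arr S) (hc : 1 ≤ S.card) :
    l.getD 0 0 ∈ S := by
  rw [← arr_mem_iff h]
  exact getD_mem (by rw [arr_length h]; omega)

lemma getD1_mem {S : Finset ℕ} {l : List ℕ} (h : l ∈ arr S) (hc : 2 ≤ S.card) :
    l.getD 1 0 ∈ S := by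
  rw [← arr_mem_iff h]
  exact getD_mem (by rw [arr_length h]; omega)

lemma getD0_ne_getD1 {S : Finset ℕ} {l : List ℕ} (h : l ∈ arr S) (hc : 2 ≤ S.card) :
    l.getD 0 0 ≠ l.getD 1 0 := by
  intro he
  have h01 := nodup_getD_inj (arr_nodup h) (i := 0) (j := 1)
    (by rw [arr_length h]; omega) (by rw [arr_length h]; omega) he
  omega

lemma head_eq_mx2 {S : Finset ℕ} {l : List ℕ} (h : l ∈ arr S) (ha : Avoid l)
    (hc : 3 ≤ S.card) (hne : l.getD 0 0 ≠ mx S) : l.getD 0 0 = mx2 S := by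
  set x := l.getD 0 0 with hx
  have hxS : x ∈ S := head_mem h (by omega)
  have hxlt : x < mx S := lt_of_le_of_ne (le_mx hxS) hne
  have key : ∀ y ∈ S, y ≠ mx S → y ≤ x := by
    intro y hyS hyne
    by_contra hlt
    push_neg at hlt
    -- positions of y and mx S
    obtain ⟨j, hj, hjv⟩ := mem_iff_getD.mp ((arr_mem_iff h).mpr hyS)
    obtain ⟨j', hj', hjv'⟩ := mem_iff_getD.mp ((arr_mem_iff h).mpr (mx_mem ⟨x, hxS⟩))
    have hj0 : j ≠ 0 := by intro hh; rw [hh] at hjv; omega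
    have hj'0 : j' ≠ 0 := by intro hh; rw [hh] at hjv'; omega
    have hjj' : j ≠ j' := by intro hh; rw [hh, hjv'] at hjv; exact hyne hjv.symm
    rcases Nat.lt_or_ge j j' with hlt2 | hge
    · exact ha 0 j j' (by omega) hlt2 hj' ⟨by omega, by omega⟩
    · exact ha 0 j' j (by omega) (by omega) hj ⟨by omega, by omega⟩
  symm
  apply mx_eq_of (Finset.mem_erase.mpr ⟨hne, hxS⟩)
  intro y hy
  exact key y (Finset.mem_of_mem_erase hy) (Finset.ne_of_mem_erase hy)
/-- descent-at-0 indicator. -/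
def d0 (r : List ℕ) : ℕ := if r.getD 1 0 < r.getD 0 0 then 1 else 0

noncomputable def cntM (S : Finset ℕ) (k : ℕ) : ℕ :=
  ((arr S).filter fun l => Avoid l ∧ ddescents l = k ∧ l.getD 0 0 = mx S).card

noncomputable def cntU (S : Finset ℕ) (k : ℕ) : ℕ :=
  ((arr S).filter fun l =>
    Avoid l ∧ ddescents l = k ∧ l.getD 0 0 ≠ mx S ∧ l.getD 0 0 < l.getD 1 0).card

noncomputable def cntD (S : Finset ℕ) (k : ℕ) : ℕ :=
  ((arr S).filter fun l =>
    Avoid l ∧ ddescents l = k ∧ l.getD 0 0 ≠ mx S ∧ l.getD 1 0 < l.getD 0 0).card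

lemma arr_ne_nil {S : Finset ℕ} {l : List ℕ} (h : l ∈ arr S) (hc : 1 ≤ S.card) :
    l ≠ [] := by
  intro he
  have := arr_length h
  rw [he] at this
  simp at this
  omega

lemma ite_and_eq_d0 {r : List ℕ} {x : ℕ} (h : r.getD 0 0 < x) :
    (if r.getD 0 0 < x ∧ r.getD 1 0 < r.getD 0 0 then 1 else 0) = d0 r := by
  unfold d0
  by_cases hb : r.getD 1 0 < r.getD 0 0
  · rw [if_pos ⟨h, hb⟩, if_pos hb]
  · rw [if_neg (fun hc => hb hc.2), if_neg hb]

lemma ite_and_eq_zero {r : List ℕ} {x : ℕ} (h : ¬ r.getD 0 0 < x) :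
    (if r.getD 0 0 < x ∧ r.getD 1 0 < r.getD 0 0 then 1 else 0) = 0 :=
  if_neg (fun hc => h hc.1)

lemma T1 {S : Finset ℕ} (hc : 3 ≤ S.card) (k : ℕ) :
    cntM S k =
      ((arr (S.erase (mx S))).filter fun r => Avoid r ∧ ddescents r + d0 r = k).card := by
  unfold cntM
  apply Finset.card_bij' (fun l _ => l.tail) (fun r _ => mx S :: r)
  · -- hi
    intro l hl
    rw [Finset.mem_filter] at hl
    obtain ⟨harr, hav, hdd, hhd⟩ := hl
    have hne : l ≠ [] := arr_ne_nil harr (by omega)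
    have htail : l.tail ∈ arr (S.erase (mx S)) := hhd ▸ tail_mem_arr harr hne
    have hlen : 2 ≤ l.tail.length := by
      rw [arr_length htail, Finset.card_erase_of_mem (mx_mem (Finset.card_pos.mp (by omega)))]
      omega
    have hcons : l.getD 0 0 :: l.tail = l := getD_cons_tail hne
    rw [Finset.mem_filter]
    refine ⟨htail, ?_, ?_⟩
    · rw [← hcons] at hav
      exact (avoid_cons.mp hav).1
    · rw [← hcons, hhd] at hdd
      rw [ddescents_cons hlen] at hdd
      have h0 : l.tail.getD 0 0 < mx S := by
        have := head_mem htail (by rw [Finset.card_erase_of_mem (mx_mem (Finset.card_pos.mp (by omega)))]; omega)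
        have h1 := Finset.mem_of_mem_erase this
        have h2 := Finset.ne_of_mem_erase this
        exact lt_of_le_of_ne (le_mx h1) h2
      rw [ite_and_eq_d0 h0] at hdd
      exact hdd
  · -- hj
    intro r hr
    rw [Finset.mem_filter] at hr
    obtain ⟨harr, hav, hdd⟩ := hr
    have hmxS : mx S ∈ S := mx_mem (Finset.card_pos.mp (by omega))
    have hlen : 2 ≤ r.length := by
      rw [arr_length harr, Finset.card_erase_of_mem hmxS]; omega
    have hcons : (mx S :: r) ∈ arr S := cons_mem_arr harr hmxS
    rw [Finset.mem_filter]
    refine ⟨hcons, ?_, ?_, by simp⟩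
    · rw [avoid_cons]
      refine ⟨hav, ?_⟩
      intro j k' hjk hk' ⟨hj, _⟩
      have : r.getD j 0 ∈ S.erase (mx S) := by
        rw [← arr_mem_iff harr]; exact getD_mem (by omega)
      have := le_mx (Finset.mem_of_mem_erase this)
      omega
    · rw [ddescents_cons hlen]
      have h0 : r.getD 0 0 < mx S := by
        have hm := head_mem harr (by rw [Finset.card_erase_of_mem hmxS]; omega)
        exact lt_of_le_of_ne (le_mx (Finset.mem_of_mem_erase hm)) (Finset.ne_of_mem_erase hm)
      rw [ite_and_eq_d0 h0]
      exact hdd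
  · -- left inverse
    intro l hl
    rw [Finset.mem_filter] at hl
    rw [← hl.2.2.2]
    exact getD_cons_tail (arr_ne_nil hl.1 (by omega))
  · -- right inverse
    intro r _
    rfl
lemma tail_getD {l : List ℕ} (hne : l ≠ []) (i : ℕ) :
    l.tail.getD i 0 = l.getD (i+1) 0 := by
  cases l with
  | nil => exact absurd rfl hne
  | cons a t => simp [List.getD_cons_succ]

lemma mx2_mem_self {S : Finset ℕ} (hc : 2 ≤ S.card) : mx2 S ∈ S :=
  Finset.mem_of_mem_erase (mx2_mem hc)

lemma card_erase_mx2 {S : Finset ℕ} (hc : 2 ≤ S.card) :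
    (S.erase (mx2 S)).card = S.card - 1 :=
  Finset.card_erase_of_mem (mx2_mem_self hc)

lemma avoid_cons_mx2 {S : Finset ℕ} {r : List ℕ} (hc : 3 ≤ S.card)
    (harr : r ∈ arr (S.erase (mx2 S))) (hav : Avoid r) : Avoid (mx2 S :: r) := by
  rw [avoid_cons]
  refine ⟨hav, ?_⟩
  intro j k' hjk hk' ⟨hj, hk⟩
  have hjm : r.getD j 0 ∈ S.erase (mx2 S) := by
    rw [← arr_mem_iff harr]; exact getD_mem (by omega)
  have hkm : r.getD k' 0 ∈ S.erase (mx2 S) := by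
    rw [← arr_mem_iff harr]; exact getD_mem hk'
  have hje : r.getD j 0 = mx S := eq_mx_of_mx2_lt (Finset.mem_of_mem_erase hjm) hj
  have hke : r.getD k' 0 = mx S := eq_mx_of_mx2_lt (Finset.mem_of_mem_erase hkm) hk
  have := nodup_getD_inj (arr_nodup harr) (by omega : j < r.length) hk' (hje.trans hke.symm)
  omega

lemma T2 {S : Finset ℕ} (hc : 3 ≤ S.card) (k : ℕ) :
    cntU S k = cntM (S.erase (mx2 S)) k := by
  unfold cntU cntM
  apply Finset.card_bij' (fun l _ => l.tail) (fun r _ => mx2 S :: r)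
  · intro l hl
    rw [Finset.mem_filter] at hl
    obtain ⟨harr, hav, hdd, hne, hasc⟩ := hl
    have hnil : l ≠ [] := arr_ne_nil harr (by omega)
    have hhd : l.getD 0 0 = mx2 S := head_eq_mx2 harr hav hc hne
    have htail : l.tail ∈ arr (S.erase (mx2 S)) := hhd ▸ tail_mem_arr harr hnil
    have hlen : 2 ≤ l.tail.length := by
      rw [arr_length htail, card_erase_mx2 (by omega)]; omega
    have hcons : l.getD 0 0 :: l.tail = l := getD_cons_tail hnil
    have h1 : l.getD 1 0 = mx S := by
      apply eq_mx_of_mx2_lt (getD1_mem harr (by omega))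
      rw [← hhd]; exact hasc
    rw [Finset.mem_filter]
    refine ⟨htail, ?_, ?_, ?_⟩
    · rw [← hcons] at hav
      exact (avoid_cons.mp hav).1
    · rw [← hcons, ddescents_cons hlen] at hdd
      rw [ite_and_eq_zero (by
        rw [tail_getD hnil, h1, hhd]
        have := mx2_lt_mx (S := S) (by omega : 2 ≤ S.card)
        omega)] at hdd
      omega
    · rw [tail_getD hnil, h1, mx_erase_mx2 (by omega)]
  · intro r hr
    rw [Finset.mem_filter] at hr
    obtain ⟨harr, hav, hdd, hhd⟩ := hr
    have hm2 : mx2 S ∈ S := mx2_mem_self (by omega)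
    have hlen : 2 ≤ r.length := by rw [arr_length harr, card_erase_mx2 (by omega)]; omega
    have hhd' : r.getD 0 0 = mx S := by rw [hhd, mx_erase_mx2 (by omega)]
    rw [Finset.mem_filter]
    refine ⟨cons_mem_arr harr hm2, avoid_cons_mx2 hc harr hav, ?_, ?_, ?_⟩
    · rw [ddescents_cons hlen, ite_and_eq_zero (by
        rw [hhd']
        have := mx2_lt_mx (S := S) (by omega : 2 ≤ S.card)
        omega), hdd]
      omega
    · simp only [List.getD_cons_zero]
      exact (mx2_lt_mx (by omega)).ne
    · simp only [List.getD_cons_zero, List.getD_cons_succ, hhd']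
      exact mx2_lt_mx (by omega)
  · intro l hl
    rw [Finset.mem_filter] at hl
    obtain ⟨harr, hav, hdd, hne, hasc⟩ := hl
    have hnil : l ≠ [] := arr_ne_nil harr (by omega)
    rw [← head_eq_mx2 harr hav hc hne]
    exact getD_cons_tail hnil
  · intro r _
    rfl

lemma T3 {S : Finset ℕ} (hc : 3 ≤ S.card) (k : ℕ) :
    cntD S k = ((arr (S.erase (mx2 S))).filter fun r =>
      Avoid r ∧ ddescents r + d0 r = k ∧ r.getD 0 0 ≠ mx (S.erase (mx2 S))).card := by
  unfold cntD
  apply Finset.card_bij' (fun l _ => l.tail) (fun r _ => mx2 S :: r)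
  · intro l hl
    rw [Finset.mem_filter] at hl
    obtain ⟨harr, hav, hdd, hne, hdes⟩ := hl
    have hnil : l ≠ [] := arr_ne_nil harr (by omega)
    have hhd : l.getD 0 0 = mx2 S := head_eq_mx2 harr hav hc hne
    have htail : l.tail ∈ arr (S.erase (mx2 S)) := hhd ▸ tail_mem_arr harr hnil
    have hlen : 2 ≤ l.tail.length := by
      rw [arr_length htail, card_erase_mx2 (by omega)]; omega
    have hcons : l.getD 0 0 :: l.tail = l := getD_cons_tail hnil
    rw [Finset.mem_filter]
    refine ⟨htail, ?_, ?_, ?_⟩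
    · rw [← hcons] at hav
      exact (avoid_cons.mp hav).1
    · rw [← hcons, ddescents_cons hlen] at hdd
      rw [ite_and_eq_d0 (by rw [tail_getD hnil]; exact hdes)] at hdd
      exact hdd
    · rw [tail_getD hnil, mx_erase_mx2 (by omega)]
      intro hh
      rw [hh] at hdes
      have := le_mx (head_mem harr (by omega))
      omega
  · intro r hr
    rw [Finset.mem_filter] at hr
    obtain ⟨harr, hav, hdd, hhd⟩ := hr
    have hm2 : mx2 S ∈ S := mx2_mem_self (by omega)
    have hlen : 2 ≤ r.length := by rw [arr_length harr, card_erase_mx2 (by omega)]; omega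
    have hr0 : r.getD 0 0 < mx2 S := by
      have hm : r.getD 0 0 ∈ S.erase (mx2 S) := head_mem harr (by rw [card_erase_mx2 (by omega)]; omega)
      have h1 : r.getD 0 0 ≤ mx2 S := le_mx2 (Finset.mem_of_mem_erase hm)
        (by rw [← mx_erase_mx2 (by omega : 2 ≤ S.card)]; exact hhd)
      exact lt_of_le_of_ne h1 (Finset.ne_of_mem_erase hm)
    rw [Finset.mem_filter]
    refine ⟨cons_mem_arr harr hm2, avoid_cons_mx2 hc harr hav, ?_, ?_, ?_⟩
    · rw [ddescents_cons hlen, ite_and_eq_d0 hr0, hdd]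
    · simp only [List.getD_cons_zero]
      exact (mx2_lt_mx (by omega)).ne
    · simp only [List.getD_cons_zero, List.getD_cons_succ]
      exact hr0
  · intro l hl
    rw [Finset.mem_filter] at hl
    obtain ⟨harr, hav, hdd, hne, hdes⟩ := hl
    have hnil : l ≠ [] := arr_ne_nil harr (by omega)
    rw [← head_eq_mx2 harr hav hc hne]
    exact getD_cons_tail hnil
  · intro r _
    rfl
lemma d0_eq_one {r : List ℕ} (h : r.getD 1 0 < r.getD 0 0) : d0 r = 1 := if_pos h
lemma d0_eq_zero {r : List ℕ} (h : ¬ r.getD 1 0 < r.getD 0 0) : d0 r = 0 := if_neg h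

lemma head_ne_mx_of_asc {S' : Finset ℕ} {r : List ℕ} (hr : r ∈ arr S') (hc : 2 ≤ S'.card)
    (h : r.getD 0 0 < r.getD 1 0) : r.getD 0 0 ≠ mx S' := by
  have := le_mx (getD1_mem hr hc)
  omega

lemma desc_of_head_mx {S' : Finset ℕ} {r : List ℕ} (hr : r ∈ arr S') (hc : 2 ≤ S'.card)
    (h : r.getD 0 0 = mx S') : r.getD 1 0 < r.getD 0 0 := by
  have h1 := le_mx (getD1_mem hr hc)
  have h2 := getD0_ne_getD1 hr hc
  omega

lemma splitA (S' : Finset ℕ) (hc : 2 ≤ S'.card) (k : ℕ) :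
    ((arr S').filter fun r => Avoid r ∧ ddescents r + d0 r = k).card =
      cntU S' k + (Nat.casesOn k 0 (fun k' => cntM S' k' + cntD S' k')) := by
  classical
  have hsplit := Finset.card_filter_add_card_filter_not
    (s := (arr S').filter (fun r => Avoid r ∧ ddescents r + d0 r = k))
    (p := fun r => r.getD 1 0 < r.getD 0 0)
  rw [Finset.filter_filter, Finset.filter_filter] at hsplit
  rw [← hsplit]
  have hU : (arr S').filter (fun r => (Avoid r ∧ ddescents r + d0 r = k) ∧
      ¬ r.getD 1 0 < r.getD 0 0) =
      (arr S').filter (fun r =>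
        Avoid r ∧ ddescents r = k ∧ r.getD 0 0 ≠ mx S' ∧ r.getD 0 0 < r.getD 1 0) := by
    apply Finset.filter_congr
    intro r hr
    constructor
    · rintro ⟨⟨hav, hdd⟩, hnd⟩
      have hasc : r.getD 0 0 < r.getD 1 0 :=
        lt_of_le_of_ne (by omega) (getD0_ne_getD1 hr hc)
      rw [d0_eq_zero hnd] at hdd
      exact ⟨hav, by omega, head_ne_mx_of_asc hr hc hasc, hasc⟩
    · rintro ⟨hav, hdd, _, hasc⟩
      have hnd : ¬ r.getD 1 0 < r.getD 0 0 := by omega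
      rw [d0_eq_zero hnd] at *
      exact ⟨⟨hav, by omega⟩, hnd⟩
  rw [hU]
  unfold cntU
  match k with
  | 0 =>
    have : (arr S').filter (fun r => (Avoid r ∧ ddescents r + d0 r = 0) ∧
        r.getD 1 0 < r.getD 0 0) = ∅ := by
      apply Finset.filter_false_of_mem
      rintro r _ ⟨⟨_, hdd⟩, hd⟩
      rw [d0_eq_one hd] at hdd
      omega
    rw [this]
    simp [Nat.add_comm]
  | (k'+1) =>
    have hsplit2 := Finset.card_filter_add_card_filter_not
      (s := (arr S').filter (fun r => (Avoid r ∧ ddescents r + d0 r = k'+1) ∧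
        r.getD 1 0 < r.getD 0 0))
      (p := fun r => r.getD 0 0 = mx S')
    rw [Finset.filter_filter, Finset.filter_filter] at hsplit2
    rw [← hsplit2]
    have hM : (arr S').filter (fun r => ((Avoid r ∧ ddescents r + d0 r = k'+1) ∧
        r.getD 1 0 < r.getD 0 0) ∧ r.getD 0 0 = mx S') =
        (arr S').filter (fun r => Avoid r ∧ ddescents r = k' ∧ r.getD 0 0 = mx S') := by
      apply Finset.filter_congr
      intro r hr
      constructor
      · rintro ⟨⟨⟨hav, hdd⟩, hd⟩, hm⟩
        rw [d0_eq_one hd] at hdd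
        exact ⟨hav, by omega, hm⟩
      · rintro ⟨hav, hdd, hm⟩
        have hd := desc_of_head_mx hr hc hm
        rw [d0_eq_one hd] at *
        exact ⟨⟨⟨hav, by omega⟩, hd⟩, hm⟩
    have hD : (arr S').filter (fun r => ((Avoid r ∧ ddescents r + d0 r = k'+1) ∧
        r.getD 1 0 < r.getD 0 0) ∧ ¬ r.getD 0 0 = mx S') =
        (arr S').filter (fun r =>
          Avoid r ∧ ddescents r = k' ∧ r.getD 0 0 ≠ mx S' ∧ r.getD 1 0 < r.getD 0 0) := by
      apply Finset.filter_congr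
      intro r hr
      constructor
      · rintro ⟨⟨⟨hav, hdd⟩, hd⟩, hm⟩
        rw [d0_eq_one hd] at hdd
        exact ⟨hav, by omega, hm, hd⟩
      · rintro ⟨hav, hdd, hm, hd⟩
        rw [d0_eq_one hd] at *
        exact ⟨⟨⟨hav, by omega⟩, hd⟩, hm⟩
    rw [hM, hD]
    have hred : (Nat.casesOn (k'+1) 0 (fun j => cntM S' j + cntD S' j) : ℕ) =
        cntM S' k' + cntD S' k' := rfl
    rw [hred]
    unfold cntM cntD
    omega

lemma splitB (S' : Finset ℕ) (hc : 2 ≤ S'.card) (k : ℕ) :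
    ((arr S').filter fun r =>
        Avoid r ∧ ddescents r + d0 r = k ∧ r.getD 0 0 ≠ mx S').card =
      cntU S' k + (Nat.casesOn k 0 (fun k' => cntD S' k')) := by
  classical
  have hsplit := Finset.card_filter_add_card_filter_not
    (s := (arr S').filter (fun r => Avoid r ∧ ddescents r + d0 r = k ∧ r.getD 0 0 ≠ mx S'))
    (p := fun r => r.getD 1 0 < r.getD 0 0)
  rw [Finset.filter_filter, Finset.filter_filter] at hsplit
  rw [← hsplit]
  have hU : (arr S').filter (fun r => (Avoid r ∧ ddescents r + d0 r = k ∧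
      r.getD 0 0 ≠ mx S') ∧ ¬ r.getD 1 0 < r.getD 0 0) =
      (arr S').filter (fun r =>
        Avoid r ∧ ddescents r = k ∧ r.getD 0 0 ≠ mx S' ∧ r.getD 0 0 < r.getD 1 0) := by
    apply Finset.filter_congr
    intro r hr
    constructor
    · rintro ⟨⟨hav, hdd, hm⟩, hnd⟩
      have hasc : r.getD 0 0 < r.getD 1 0 :=
        lt_of_le_of_ne (by omega) (getD0_ne_getD1 hr hc)
      rw [d0_eq_zero hnd] at hdd
      exact ⟨hav, by omega, hm, hasc⟩
    · rintro ⟨hav, hdd, hm, hasc⟩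
      have hnd : ¬ r.getD 1 0 < r.getD 0 0 := by omega
      rw [d0_eq_zero hnd] at *
      exact ⟨⟨hav, by omega, hm⟩, hnd⟩
  rw [hU]
  unfold cntU
  match k with
  | 0 =>
    have : (arr S').filter (fun r => (Avoid r ∧ ddescents r + d0 r = 0 ∧
        r.getD 0 0 ≠ mx S') ∧ r.getD 1 0 < r.getD 0 0) = ∅ := by
      apply Finset.filter_false_of_mem
      rintro r _ ⟨⟨_, hdd, _⟩, hd⟩
      rw [d0_eq_one hd] at hdd
      omega
    rw [this]
    simp [Nat.add_comm]
  | (k'+1) =>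
    have hD : (arr S').filter (fun r => (Avoid r ∧ ddescents r + d0 r = k'+1 ∧
        r.getD 0 0 ≠ mx S') ∧ r.getD 1 0 < r.getD 0 0) =
        (arr S').filter (fun r =>
          Avoid r ∧ ddescents r = k' ∧ r.getD 0 0 ≠ mx S' ∧ r.getD 1 0 < r.getD 0 0) := by
      apply Finset.filter_congr
      intro r hr
      constructor
      · rintro ⟨⟨hav, hdd, hm⟩, hd⟩
        rw [d0_eq_one hd] at hdd
        exact ⟨hav, by omega, hm, hd⟩
      · rintro ⟨hav, hdd, hm, hd⟩
        rw [d0_eq_one hd] at *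
        exact ⟨⟨hav, by omega, hm⟩, hd⟩
    rw [hD]
    have hred : (Nat.casesOn (k'+1) 0 (fun j => cntD S' j) : ℕ) = cntD S' k' := rfl
    rw [hred]
    unfold cntD
    omega
lemma ddescents_short {l : List ℕ} (h : l.length ≤ 2) : ddescents l = 0 := by
  unfold ddescents
  have h2 : l.length - 2 = 0 := by omega
  rw [h2]
  simp

lemma arr_pair {a b : ℕ} (hab : a ≠ b) :
    arr ({a, b} : Finset ℕ) = {[a, b], [b, a]} := by
  ext l
  rw [mem_arr]
  constructor
  · intro h
    have hlen : l.length = 2 := by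
      have hcard := congrArg Multiset.card h
      simp only [Multiset.coe_card] at hcard
      rw [hcard]
      show Multiset.card ({a,b} : Finset ℕ).val = 2
      rw [← Finset.card_def, Finset.card_pair hab]
    have hnd : l.Nodup := by
      have := ({a,b} : Finset ℕ).nodup
      rw [← h] at this
      exact this
    match l, hlen with
    | [x, y], _ =>
      have hx : x ∈ ({a, b} : Finset ℕ) := by
        have hm : x ∈ ((↑[x,y] : Multiset ℕ)) := by simp
        rw [h] at hm
        exact Finset.mem_def.mpr hm
      have hy : y ∈ ({a, b} : Finset ℕ) := by
        have hm : y ∈ ((↑[x,y] : Multiset ℕ)) := by simp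
        rw [h] at hm
        exact Finset.mem_def.mpr hm
      have hxy : x ≠ y := by
        simp only [List.nodup_cons, List.mem_singleton] at hnd
        exact hnd.1
      simp only [Finset.mem_insert, Finset.mem_singleton] at hx hy
      rcases hx with rfl | rfl <;> rcases hy with rfl | rfl <;> simp_all
  · intro h
    simp only [Finset.mem_insert, Finset.mem_singleton] at h
    have hval : ({a, b} : Finset ℕ).val = a ::ₘ b ::ₘ 0 := by
      rw [Finset.insert_val_of_notMem (by simp [hab]), Finset.singleton_val]
      rfl
    rcases h with rfl | rfl
    · rw [hval]; rfl
    · rw [hval]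
      show ((b : ℕ) ::ₘ a ::ₘ 0 : Multiset ℕ) = a ::ₘ b ::ₘ 0
      rw [Multiset.cons_swap]

lemma mx_pair {a b : ℕ} (hab : a < b) : mx ({a, b} : Finset ℕ) = b := by
  apply mx_eq_of (by simp)
  intro y hy
  simp only [Finset.mem_insert, Finset.mem_singleton] at hy
  rcases hy with rfl | rfl <;> omega

lemma base_cntM {a b : ℕ} (hab : a < b) (k : ℕ) :
    cntM ({a, b} : Finset ℕ) k = Nat.choose 0 k := by
  unfold cntM
  rw [arr_pair hab.ne, mx_pair hab]
  rw [show ({[a,b],[b,a]} : Finset (List ℕ)) = insert [a,b] {[b,a]} from rfl]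
  rw [Finset.filter_insert, Finset.filter_singleton]
  rw [if_neg (by simp; omega)]
  match k with
  | 0 =>
    rw [if_pos ⟨avoid_short (by simp), ddescents_short (by simp), by simp⟩]
    simp
  | (k'+1) =>
    rw [if_neg (by rw [ddescents_short (by simp)]; simp)]
    simp [Nat.choose]

lemma base_cntU {a b : ℕ} (hab : a < b) (k : ℕ) :
    cntU ({a, b} : Finset ℕ) k = Nat.choose 0 k := by
  unfold cntU
  rw [arr_pair hab.ne, mx_pair hab]
  rw [show ({[a,b],[b,a]} : Finset (List ℕ)) = insert [a,b] {[b,a]} from rfl]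
  have hba : ¬ (Avoid [b, a] ∧ ddescents [b, a] = k ∧
      [b,a].getD 0 0 ≠ b ∧ [b,a].getD 0 0 < [b,a].getD 1 0) := by
    rintro ⟨-, -, h, -⟩
    simp at h
  rw [Finset.filter_insert, Finset.filter_singleton, if_neg hba]
  match k with
  | 0 =>
    rw [if_pos ⟨avoid_short (by simp), ddescents_short (by simp),
      by simp; omega, by simp [hab]⟩]
    simp
  | (k'+1) =>
    rw [if_neg (by rintro ⟨-, hdd, -⟩; rw [ddescents_short (by simp)] at hdd; omega)]
    simp [Nat.choose]

lemma base_cntD {a b : ℕ} (hab : a < b) (k : ℕ) :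
    cntD ({a, b} : Finset ℕ) k = 0 := by
  unfold cntD
  rw [arr_pair hab.ne, mx_pair hab]
  rw [show ({[a,b],[b,a]} : Finset (List ℕ)) = insert [a,b] {[b,a]} from rfl]
  have hba : ¬ (Avoid [b, a] ∧ ddescents [b, a] = k ∧
      [b,a].getD 0 0 ≠ b ∧ [b,a].getD 1 0 < [b,a].getD 0 0) := by
    rintro ⟨-, -, h, -⟩
    simp at h
  have hab2 : ¬ (Avoid [a, b] ∧ ddescents [a, b] = k ∧
      [a,b].getD 0 0 ≠ b ∧ [a,b].getD 1 0 < [a,b].getD 0 0) := by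
    rintro ⟨-, -, -, h⟩
    simp at h
    omega
  rw [Finset.filter_insert, Finset.filter_singleton, if_neg hba, if_neg hab2]
  simp
lemma choose_one_succ (k : ℕ) : Nat.choose 1 (k+1) = Nat.choose 0 k := by
  match k with
  | 0 => rfl
  | (k'+1) => simp [Nat.choose]

lemma key (m : ℕ) : ∀ S : Finset ℕ, S.card = m + 2 → ∀ k : ℕ,
    cntM S k = Nat.choose m k ∧ cntU S k = Nat.choose (m-1) k ∧
    cntD S k = (if m = 0 then 0 else Nat.choose (m-1) k) := by
  induction m with
  | zero =>
    intro S hS k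
    obtain ⟨a, b, hab, rfl⟩ := Finset.card_eq_two.mp hS
    rcases Nat.lt_or_ge a b with h | h
    · exact ⟨base_cntM h k, base_cntU h k, by rw [base_cntD h k]; simp⟩
    · have hba : b < a := by omega
      rw [Finset.pair_comm a b]
      exact ⟨base_cntM hba k, base_cntU hba k, by rw [base_cntD hba k]; simp⟩
  | succ m ih =>
    intro S hS k
    have hc3 : 3 ≤ S.card := by omega
    have hcard_mx : (S.erase (mx S)).card = m + 2 := by
      rw [Finset.card_erase_of_mem (mx_mem (Finset.card_pos.mp (by omega)))]; omega
    have hcard_mx2 : (S.erase (mx2 S)).card = m + 2 := by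
      rw [card_erase_mx2 (by omega)]; omega
    -- cntU
    have hU : cntU S k = Nat.choose m k := by
      rw [T2 hc3 k]
      exact (ih _ hcard_mx2 k).1
    refine ⟨?_, by rw [hU]; norm_num, ?_⟩
    · -- cntM
      rw [T1 hc3 k, splitA _ (by omega) k]
      match k with
      | 0 =>
        have := (ih _ hcard_mx 0).2.1
        rw [this]
        simp
      | (k'+1) =>
        have h1 := (ih _ hcard_mx (k'+1)).2.1
        have h2 := (ih _ hcard_mx k').1
        have h3 := (ih _ hcard_mx k').2.2
        rw [h1]
        have hred : (Nat.casesOn (k'+1) 0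
            (fun j => cntM (S.erase (mx S)) j + cntD (S.erase (mx S)) j) : ℕ) =
            cntM (S.erase (mx S)) k' + cntD (S.erase (mx S)) k' := rfl
        rw [hred, h2, h3]
        match m with
        | 0 =>
          simp only [if_pos rfl]
          simp only [Nat.zero_sub, Nat.add_zero]
          rw [choose_one_succ k']
          simp [Nat.choose]
        | (n+1) =>
          rw [show n + 1 - 1 = n from rfl, if_neg (by omega : ¬ (n + 1 = 0))]
          have pasc1 : (n + 1 + 1).choose (k' + 1) = (n+1).choose k' + (n+1).choose (k'+1) :=
            Nat.choose_succ_succ _ _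
          have pasc2 : (n + 1).choose (k' + 1) = n.choose k' + n.choose (k' + 1) :=
            Nat.choose_succ_succ _ _
          omega
    · -- cntD
      rw [T3 hc3 k, splitB _ (by omega) k]
      match k with
      | 0 =>
        rw [(ih _ hcard_mx2 0).2.1]
        simp
      | (k'+1) =>
        rw [(ih _ hcard_mx2 (k'+1)).2.1]
        have hred : (Nat.casesOn (k'+1) 0 (fun j => cntD (S.erase (mx2 S)) j) : ℕ) =
            cntD (S.erase (mx2 S)) k' := rfl
        rw [hred, (ih _ hcard_mx2 k').2.2, if_neg (Nat.succ_ne_zero m)]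
        simp only [Nat.add_sub_cancel]
        match m with
        | 0 => simp
        | (n+1) =>
          rw [show n + 1 - 1 = n from rfl, if_neg (by omega : ¬ (n + 1 = 0))]
          have pasc : (n + 1).choose (k' + 1) = n.choose k' + n.choose (k' + 1) :=
            Nat.choose_succ_succ _ _
          omega
lemma total (S : Finset ℕ) (hc : 3 ≤ S.card) (k : ℕ) :
    ((arr S).filter fun l => Avoid l ∧ ddescents l = k).card =
      Nat.choose (S.card - 2) k + 2 * Nat.choose (S.card - 3) k := by
  classical
  obtain ⟨m, hm⟩ : ∃ m, S.card = m + 3 := ⟨S.card - 3, by omega⟩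
  have h1 := Finset.card_filter_add_card_filter_not
    (s := (arr S).filter fun l => Avoid l ∧ ddescents l = k)
    (p := fun l => l.getD 0 0 = mx S)
  rw [Finset.filter_filter, Finset.filter_filter] at h1
  have h2 := Finset.card_filter_add_card_filter_not
    (s := (arr S).filter fun l => (Avoid l ∧ ddescents l = k) ∧ ¬ l.getD 0 0 = mx S)
    (p := fun l => l.getD 1 0 < l.getD 0 0)
  rw [Finset.filter_filter, Finset.filter_filter] at h2
  have hMset : (arr S).filter (fun l => (Avoid l ∧ ddescents l = k) ∧ l.getD 0 0 = mx S) =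
      (arr S).filter (fun l => Avoid l ∧ ddescents l = k ∧ l.getD 0 0 = mx S) := by
    apply Finset.filter_congr
    intro l _
    tauto
  have hDset : (arr S).filter
      (fun l => ((Avoid l ∧ ddescents l = k) ∧ ¬ l.getD 0 0 = mx S) ∧
        l.getD 1 0 < l.getD 0 0) =
      (arr S).filter (fun l =>
        Avoid l ∧ ddescents l = k ∧ l.getD 0 0 ≠ mx S ∧ l.getD 1 0 < l.getD 0 0) := by
    apply Finset.filter_congr
    intro l _
    tauto
  have hUset : (arr S).filter
      (fun l => ((Avoid l ∧ ddescents l = k) ∧ ¬ l.getD 0 0 = mx S) ∧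
        ¬ l.getD 1 0 < l.getD 0 0) =
      (arr S).filter (fun l =>
        Avoid l ∧ ddescents l = k ∧ l.getD 0 0 ≠ mx S ∧ l.getD 0 0 < l.getD 1 0) := by
    apply Finset.filter_congr
    intro l hl
    have hne := getD0_ne_getD1 hl (by omega)
    constructor
    · rintro ⟨⟨⟨hav, hdd⟩, hm'⟩, hnd⟩
      exact ⟨hav, hdd, hm', by omega⟩
    · rintro ⟨hav, hdd, hm', hasc⟩
      exact ⟨⟨⟨hav, hdd⟩, hm'⟩, by omega⟩
  rw [hMset] at h1
  rw [hDset, hUset] at h2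
  have hkey := key (m+1) S (by omega) k
  rw [show m + 1 - 1 = m from rfl] at hkey
  obtain ⟨hM, hU, hD⟩ := hkey
  unfold cntM at hM
  unfold cntU at hU
  unfold cntD at hD
  rw [if_neg (by omega : ¬ (m + 1 = 0))] at hD
  rw [show S.card - 2 = m + 1 by omega, show S.card - 3 = m by omega]
  omega
lemma avoidsAll_iff {l : List ℕ} (hn : l.Nodup) :
    AvoidsAll l [[1,2,3],[1,3,2]] ↔ Avoid l := by
  constructor
  · intro h
    intro i j k hij hjk hk ⟨h1, h2⟩
    have hi : i < l.length := by omega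
    have hj : j < l.length := by omega
    have hjk' : l.getD j 0 ≠ l.getD k 0 := fun he => by
      have := nodup_getD_inj hn hj hk he
      omega
    rcases Nat.lt_or_ge (l.getD j 0) (l.getD k 0) with hlt | hge
    · apply h [1,2,3] (by simp)
      have g01 : l[i]'hi < l[j]'hj := by
        rw [List.getD_eq_getElem _ _ hi, List.getD_eq_getElem _ _ hj] at h1; exact h1
      have g02 : l[i]'hi < l[k]'hk := by
        rw [List.getD_eq_getElem _ _ hi, List.getD_eq_getElem _ _ hk] at h2; exact h2
      have g12 : l[j]'hj < l[k]'hk := by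
        rw [List.getD_eq_getElem _ _ hj, List.getD_eq_getElem _ _ hk] at hlt; exact hlt
      refine ⟨![⟨i, hi⟩, ⟨j, hj⟩, ⟨k, hk⟩], ?_, ?_⟩
      · intro a b hab
        fin_cases a <;> fin_cases b <;> simp_all [Fin.lt_def] <;> omega
      · intro a b
        fin_cases a <;> fin_cases b <;> simp_all <;> omega
    · have hlt : l.getD k 0 < l.getD j 0 := by omega
      apply h [1,3,2] (by simp)
      have g01 : l[i]'hi < l[j]'hj := by
        rw [List.getD_eq_getElem _ _ hi, List.getD_eq_getElem _ _ hj] at h1; exact h1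
      have g02 : l[i]'hi < l[k]'hk := by
        rw [List.getD_eq_getElem _ _ hi, List.getD_eq_getElem _ _ hk] at h2; exact h2
      have g12 : l[k]'hk < l[j]'hj := by
        rw [List.getD_eq_getElem _ _ hk, List.getD_eq_getElem _ _ hj] at hlt; exact hlt
      refine ⟨![⟨i, hi⟩, ⟨j, hj⟩, ⟨k, hk⟩], ?_, ?_⟩
      · intro a b hab
        fin_cases a <;> fin_cases b <;> simp_all [Fin.lt_def] <;> omega
      · intro a b
        fin_cases a <;> fin_cases b <;> simp_all <;> omega
  · intro h ρ hρ hcon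
    simp only [List.mem_cons, List.mem_singleton, List.not_mem_nil, or_false] at hρ
    rcases hρ with rfl | rfl <;>
    · obtain ⟨f, hmono, hiff⟩ := hcon
      have h01 : f ⟨0, by simp⟩ < f ⟨1, by simp⟩ := hmono (Fin.mk_lt_mk.mpr (by norm_num))
      have h12 : f ⟨1, by simp⟩ < f ⟨2, by simp⟩ := hmono (Fin.mk_lt_mk.mpr (by norm_num))
      have ha := (hiff ⟨0, by simp⟩ ⟨1, by simp⟩).mp (by decide)
      have hb := (hiff ⟨0, by simp⟩ ⟨2, by simp⟩).mp (by decide)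
      refine h (↑(f ⟨0, by simp⟩)) (↑(f ⟨1, by simp⟩)) (↑(f ⟨2, by simp⟩))
        (Fin.lt_def.mp h01) (Fin.lt_def.mp h12) (f ⟨2, by simp⟩).isLt ⟨?_, ?_⟩
      · rw [List.getD_eq_getElem _ _ (f ⟨0, by simp⟩).isLt,
          List.getD_eq_getElem _ _ (f ⟨1, by simp⟩).isLt]
        exact ha
      · rw [List.getD_eq_getElem _ _ (f ⟨0, by simp⟩).isLt,
          List.getD_eq_getElem _ _ (f ⟨2, by simp⟩).isLt]
        exact hb
lemma mem_arr_of_toFinset {l : List ℕ} {S : Finset ℕ} (hn : l.Nodup) (h : l.toFinset = S) :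
    l ∈ arr S := by
  rw [mem_arr, ← h, ← List.toFinset_coe, Multiset.toFinset_val,
    Multiset.dedup_eq_self.mpr (Multiset.coe_nodup.mpr hn)]

lemma permWord_nodup {n : ℕ} (π : Equiv.Perm (Fin n)) : (permWord π).Nodup := by
  apply List.nodup_ofFn.mpr
  intro a b hab
  simp only at hab
  exact π.injective (Fin.ext (by omega))

lemma permWord_mem {n : ℕ} (π : Equiv.Perm (Fin n)) :
    permWord π ∈ arr (Finset.Icc 1 n) := by
  apply mem_arr_of_toFinset (permWord_nodup π)
  ext y
  simp only [permWord, List.mem_toFinset, List.mem_ofFn, Finset.mem_Icc]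
  constructor
  · rintro ⟨i, rfl⟩
    have := (π i).isLt
    constructor
    · show 1 ≤ (π i : ℕ) + 1
      omega
    · show (π i : ℕ) + 1 ≤ n
      omega
  · rintro ⟨h1, h2⟩
    refine ⟨π.symm ⟨y - 1, by omega⟩, ?_⟩
    simp only [Equiv.apply_symm_apply]
    omega

lemma acount_eq (n k : ℕ) :
    acount n k ddescents [[1,2,3],[1,3,2]] =
      ((arr (Finset.Icc 1 n)).filter fun l => Avoid l ∧ ddescents l = k).card := by
  unfold acount
  apply Finset.card_bij (fun π _ => permWord π)
  · intro π hπ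
    rw [Finset.mem_filter] at hπ ⊢
    obtain ⟨-, hav, hdd⟩ := hπ
    exact ⟨permWord_mem π, (avoidsAll_iff (permWord_nodup π)).mp hav, hdd⟩
  · intro π1 _ π2 _ he
    unfold permWord at he
    rw [List.ofFn_inj] at he
    apply Equiv.ext
    intro i
    have := congrFun he i
    exact Fin.ext (by omega)
  · intro l hl
    rw [Finset.mem_filter] at hl
    obtain ⟨harr, hav, hdd⟩ := hl
    have hlen : l.length = n := by rw [arr_length harr, Nat.card_Icc]; omega
    have hmemv : ∀ i, i < n → 1 ≤ l.getD i 0 ∧ l.getD i 0 ≤ n := by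
      intro i h
      have hm : l.getD i 0 ∈ Finset.Icc 1 n := by
        rw [← arr_mem_iff harr]; exact getD_mem (by omega)
      simpa [Finset.mem_Icc] using hm
    have hinj : Function.Injective
        (fun i : Fin n => (⟨l.getD i 0 - 1, by have := hmemv i i.isLt; omega⟩ : Fin n)) := by
      intro a b hab
      simp only [Fin.mk.injEq] at hab
      have ha := hmemv a a.isLt
      have hb := hmemv b b.isLt
      have he : l.getD a 0 = l.getD b 0 := by omega
      exact Fin.ext (nodup_getD_inj (arr_nodup harr) (by omega) (by omega) he)
    have hπw : permWord (Equiv.ofBijective _ (Finite.injective_iff_bijective.mp hinj)) = l := by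
      unfold permWord
      apply List.ext_getElem (by simpa using hlen.symm)
      intro i h1 h2
      rw [List.getElem_ofFn]
      simp only [Equiv.ofBijective_apply]
      rw [← List.getD_eq_getElem l 0 h2]
      have := hmemv i (by omega)
      show l.getD i 0 - 1 + 1 = l.getD i 0
      omega
    exact ⟨Equiv.ofBijective _ (Finite.injective_iff_bijective.mp hinj),
      Finset.mem_filter.mpr ⟨Finset.mem_univ _, by
        rw [hπw]
        exact ⟨(avoidsAll_iff (arr_nodup harr)).mpr hav, hdd⟩⟩, hπw⟩

theorem stmt13 (n k : ℕ) (hn : 3 ≤ n) :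
    acount n k ddescents [[1,2,3],[1,3,2]] =
      Nat.choose (n - 2) k + 2 * Nat.choose (n - 3) k := by
  rw [acount_eq]
  have hcard : (Finset.Icc 1 n).card = n := by rw [Nat.card_Icc]; omega
  rw [total (Finset.Icc 1 n) (by omega) k, hcard]
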